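/- Let Z = (e^n, e^1, …, e^{n-1}) be the n-cycle permutation matrix and let α_1, …, α_n be nonpositive reals with A = α_1 I + α_2 Z + ⋯ + α_n Z^{n-1}. Then A^{-1} exists and is an N-matrix with bdsw structure if and only if A < 0 entrywise, α_2 < α_1 < 0, and α_r = α_2^{r-1}/α_1^{r-2} for r = 3, …, n. -/

import Mathlib

open Matrix Finset
/-- A *bi-diagonal south-west* (bdsw) matrix: the diagonal, the super diagonal and the
south-west corner entry are nonzero, and all other entries are zero. -/
def Bdsw {n : ℕ} (B : Matrix (Fin (n + 2)) (Fin (n + 2)) ℝ) : Prop :=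
  (∀ i, B i i ≠ 0) ∧
  (∀ i j : Fin (n + 2), (j : ℕ) = (i : ℕ) + 1 → B i j ≠ 0) ∧
  (B (Fin.last (n + 1)) 0 ≠ 0) ∧
  (∀ i j : Fin (n + 2), i ≠ j → (j : ℕ) ≠ (i : ℕ) + 1 →
    ¬(i = Fin.last (n + 1) ∧ j = 0) → B i j = 0)

/-- The `n`-cycle permutation matrix `Z = (e^n, e^1, …, e^{n-1})`. -/
def Zmat (n : ℕ) : Matrix (Fin (n + 2)) (Fin (n + 2)) ℝ :=
  Matrix.of fun i j => if j = i + 1 then 1 else 0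

open Fin.NatCast

lemma fin_add_one_iff {n : ℕ} (i j : Fin (n+2)) :
    j = i + 1 ↔ ((j:ℕ) = (i:ℕ) + 1 ∨ (i = Fin.last (n+1) ∧ j = 0)) := by
  constructor
  · intro h
    by_cases hi : i = Fin.last (n+1)
    · exact Or.inr ⟨hi, by simp [h, hi, Fin.last_add_one]⟩
    · left
      rw [h, Fin.val_add_one, if_neg hi]
  · rintro (h | ⟨hi, hj⟩)
    · apply Fin.ext
      rw [Fin.val_add_one]
      split_ifs with hi
      · exfalso; rw [hi] at h; simp [Fin.last] at h; omega
      · exact h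
    · rw [hi, hj, Fin.last_add_one]

lemma zmat_pow {n : ℕ} (k : ℕ) (i j : Fin (n+2)) :
    ((Zmat n)^k) i j = if j = i + (k : Fin (n+2)) then 1 else 0 := by
  induction k generalizing i j with
  | zero => simp [Matrix.one_apply, eq_comm]
  | succ k ih =>
    rw [pow_succ, Matrix.mul_apply]
    have h1 : ∀ m : Fin (n+2), ((Zmat n)^k) i m * Zmat n m j
        = if m = i + (k : Fin (n+2)) then (if j = m + 1 then (1:ℝ) else 0) else 0 := by
      intro m
      rw [ih]
      by_cases h : m = i + (k : Fin (n+2)) <;> simp [h, Zmat]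
    rw [Finset.sum_congr rfl fun m _ => h1 m, Finset.sum_ite_eq' Finset.univ]
    simp only [Finset.mem_univ, if_true]
    have h2 : ((k+1:ℕ) : Fin (n+2)) = ((k:ℕ) : Fin (n+2)) + 1 := by push_cast; ring
    rw [h2, ← add_assoc]

lemma sum_two {N : ℕ} (f : Fin N → ℝ) (a b : Fin N) (hab : a ≠ b)
    (h : ∀ k, k ≠ a → k ≠ b → f k = 0) : ∑ k, f k = f a + f b := by
  rw [← Finset.sum_pair hab]
  exact (Finset.sum_subset (Finset.subset_univ _) (by
    intro x _ hx
    simp only [Finset.mem_insert, Finset.mem_singleton, not_or] at hx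
    exact h x hx.1 hx.2)).symm

lemma pow_div_pow_eq (a t : ℝ) (ha : a ≠ 0) (v : ℕ) (hv : 1 ≤ v) :
    (a * t) ^ v / a ^ (v - 1) = a * t ^ v := by
  obtain ⟨m, rfl⟩ : ∃ m, v = m + 1 := ⟨v - 1, by omega⟩
  rw [Nat.add_sub_cancel]
  field_simp
  ring

lemma fin_ne_sub_one {n : ℕ} (j : Fin (n+2)) : j ≠ j - 1 := by
  intro h
  have h2 : (1 : Fin (n+2)) = 0 := sub_eq_self.mp h.symm
  have := congrArg Fin.val h2
  simp at this

theorem stmt16 {n : ℕ} (α : Fin (n + 2) → ℝ) (hα : ∀ r, α r ≤ 0)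
    (A : Matrix (Fin (n + 2)) (Fin (n + 2)) ℝ)
    (hA : A = ∑ r : Fin (n + 2), α r • Zmat n ^ (r : ℕ)) :
    -- `A⁻¹` exists and is an `N`-matrix (a `Z`-matrix whose inverse is entrywise
    -- negative) with the bdsw structure
    (A.det ≠ 0 ∧ (∀ i j, i ≠ j → A⁻¹ i j ≤ 0) ∧ (∀ i j, A i j < 0) ∧ Bdsw A⁻¹) ↔
    ((∀ i j, A i j < 0) ∧ α 1 < α 0 ∧ α 0 < 0 ∧
      (∀ r : Fin (n + 2), 2 ≤ (r : ℕ) →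
        α r = (α 1) ^ (r : ℕ) / (α 0) ^ ((r : ℕ) - 1))) := by
  have hNe : ∀ i j, A i j = α (j - i) := by
    intro i j
    rw [hA]
    simp only [Matrix.sum_apply, Matrix.smul_apply, smul_eq_mul]
    have h1 : ∀ r : Fin (n+2), α r * ((Zmat n ^ (r:ℕ)) i j)
        = if r = j - i then α r else 0 := by
      intro r
      rw [zmat_pow, Fin.cast_val_eq_self]
      have : (j = i + r) ↔ (r = j - i) := by
        constructor
        · intro h; rw [h, add_sub_cancel_left]
        · intro h; rw [h, add_sub_cancel]
      by_cases h : r = j - i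
      · rw [if_pos h, if_pos (this.mpr h), mul_one]
      · rw [if_neg (fun hh => h (this.mp hh)), if_neg h, mul_zero]
    rw [Finset.sum_congr rfl fun r _ => h1 r, Finset.sum_ite_eq' Finset.univ]
    simp
  constructor
  · rintro ⟨hdet, hZm, hApos, hBd1, hBd2, hBd3, hBd4⟩
    have hαneg : ∀ r, α r < 0 := fun r => by
      have := hApos 0 r; rwa [hNe, sub_zero] at this
    have hα0 : α 0 < 0 := hαneg 0
    have hα1 : α 1 < 0 := hαneg 1
    have hAB : A * A⁻¹ = 1 := A.mul_nonsing_inv (isUnit_iff_ne_zero.mpr hdet)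
    have hBz : ∀ i j : Fin (n+2), j ≠ i → j ≠ i + 1 → A⁻¹ i j = 0 := by
      intro i j h1 h2
      refine hBd4 i j (Ne.symm h1) ?_ ?_
      · intro h; exact h2 ((fin_add_one_iff i j).mpr (Or.inl h))
      · intro h; exact h2 ((fin_add_one_iff i j).mpr (Or.inr h))
    have hBs : ∀ j : Fin (n+2), A⁻¹ (j-1) j < 0 := by
      intro j
      have hle : A⁻¹ (j-1) j ≤ 0 := hZm _ _ (Ne.symm (fin_ne_sub_one j))
      have hj : j = (j - 1) + 1 := (sub_add_cancel j 1).symm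
      have hne0 : A⁻¹ (j-1) j ≠ 0 := by
        rcases (fin_add_one_iff (j-1) j).mp hj with h | ⟨h1, h2⟩
        · exact hBd2 _ _ h
        · rw [h1, h2]; exact hBd3
      exact lt_of_le_of_ne hle hne0
    have key : ∀ (u j : Fin (n+2)), α u * A⁻¹ j j + α (u - 1) * A⁻¹ (j-1) j
        = if u = 0 then 1 else 0 := by
      intro u j
      set i := j - u with hi
      have h1 : (A * A⁻¹) i j = (1 : Matrix (Fin (n+2)) (Fin (n+2)) ℝ) i j := by rw [hAB]
      rw [Matrix.mul_apply, Matrix.one_apply] at h1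
      have hsum : ∑ k, A i k * A⁻¹ k j = A i j * A⁻¹ j j + A i (j-1) * A⁻¹ (j-1) j := by
        refine sum_two _ j (j-1) (fin_ne_sub_one j) ?_
        intro k hk1 hk2
        rw [hBz k j (Ne.symm hk1) ?_, mul_zero]
        intro h
        exact hk2 (by rw [h, add_sub_cancel_right])
      rw [hsum, hNe, hNe] at h1
      have e1 : j - i = u := by rw [hi]; exact sub_sub_cancel j u
      have e2 : j - 1 - i = u - 1 := by rw [hi]; abel
      have e3 : (i = j) ↔ (u = 0) := by
        rw [hi]; constructor
        · intro h; have := sub_eq_self.mp h; exact this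
        · intro h; rw [h, sub_zero]
      rw [e1, e2] at h1
      rwa [if_congr e3 rfl rfl] at h1
    set t := α 1 / α 0 with htdef
    set d := A⁻¹ (0 : Fin (n+2)) 0 with hddef
    set s := A⁻¹ ((0:Fin (n+2)) - 1) 0 with hsdef
    have hdne : d ≠ 0 := hBd1 0
    have hsneg : s < 0 := hBs 0
    have hone : (1 : Fin (n+2)) ≠ 0 := by
      intro h; have := congrArg Fin.val h; simp at this
    have key0 : ∀ u : Fin (n+2), α u * d + α (u - 1) * s = if u = 0 then 1 else 0 :=
      fun u => key u 0
    have eq1 : α 1 * d + α 0 * s = 0 := by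
      have h := key0 1
      rw [if_neg hone, sub_self] at h
      exact h
    have hs : s = -(t * d) := by
      have h2 : α 0 * s = α 0 * (-(t * d)) := by
        have h3 : α 0 * (-(t * d)) = -(α 1 * d) := by
          rw [htdef]; field_simp [hα0.ne]
        rw [h3]; linarith [eq1]
      exact mul_left_cancel₀ hα0.ne h2
    have hrec : ∀ u : Fin (n+2), u ≠ 0 → α u = t * α (u - 1) := by
      intro u hu
      have h := key0 u
      rw [if_neg hu, hs] at h
      have h2 : (α u - t * α (u-1)) * d = 0 := by linear_combination h
      rcases mul_eq_zero.mp h2 with h3 | h3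
      · linarith [sub_eq_zero.mp h3]
      · exact absurd h3 hdne
    have hpowaux : ∀ m : ℕ, ∀ r : Fin (n+2), (r:ℕ) = m → α r = α 0 * t ^ m := by
      intro m
      induction m with
      | zero =>
        intro r hr
        have : r = 0 := Fin.ext (by simpa using hr)
        simp [this]
      | succ m ih =>
        intro r hr
        have hr0 : r ≠ 0 := by
          intro h; rw [h] at hr; simp at hr
        have hv : ((r - 1 : Fin (n+2)) : ℕ) = m := by
          rw [Fin.coe_sub_one, if_neg hr0]; omega
        rw [hrec r hr0, ih _ hv, pow_succ]; ring
    have hpow : ∀ r : Fin (n+2), α r = α 0 * t ^ (r:ℕ) := fun r => hpowaux _ r rfl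
    have ht0 : 0 < t := div_pos_of_neg_of_neg hα1 hα0
    have hd0 : 0 < d := by
      by_contra h
      push_neg at h
      have : t * d ≤ 0 := mul_nonpos_of_nonneg_of_nonpos ht0.le h
      linarith
    have hm1 : (((0:Fin (n+2)) - 1 : Fin (n+2)) : ℕ) = n+1 := by
      rw [Fin.coe_sub_one, if_pos rfl]
    have equ0 : α 0 * d + α ((0:Fin (n+2)) - 1) * s = 1 := by
      have h := key0 0
      rw [if_pos rfl] at h
      exact h
    have hmain : α 0 * d * (1 - t^(n+2)) = 1 := by
      rw [hpow ((0:Fin (n+2)) - 1), hm1, hs] at equ0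
      linear_combination equ0
    have hαd : α 0 * d < 0 := mul_neg_of_neg_of_pos hα0 hd0
    have htN : 1 < t^(n+2) := by
      by_contra h
      push_neg at h
      nlinarith
    have ht1 : 1 < t := by
      by_contra h
      push_neg at h
      exact absurd htN (not_lt.mpr (pow_le_one₀ ht0.le h))
    have h1t : α 1 = α 0 * t := by simpa using hpow 1
    refine ⟨hApos, by nlinarith, hα0, ?_⟩
    intro r hr
    rw [hpow r, h1t]
    exact (pow_div_pow_eq (α 0) t hα0.ne _ (by omega)).symm
  · rintro ⟨hApos, h10, h0, hform⟩
    set t := α 1 / α 0 with htdef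
    have h0ne : α 0 ≠ 0 := h0.ne
    have ht1 : 1 < t := by
      rw [htdef, lt_div_iff_of_neg h0]; linarith
    have ht0 : 0 < t := zero_lt_one.trans ht1
    have h1t : α 1 = α 0 * t := by
      rw [htdef, mul_div_cancel₀ _ h0ne]
    have hpow : ∀ r : Fin (n+2), α r = α 0 * t ^ (r:ℕ) := by
      intro r
      rcases Nat.lt_or_ge (r:ℕ) 2 with hr | hr
      · interval_cases h : (r:ℕ)
        · have : r = 0 := Fin.ext (by simpa using h)
          rw [this]; simp
        · have : r = 1 := Fin.ext (by rw [h, Fin.val_one])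
          rw [this, pow_one, h1t]
      · rw [hform r hr, h1t]
        exact pow_div_pow_eq (α 0) t h0ne _ (by omega)
    have htN : 1 < t^(n+2) := one_lt_pow₀ ht1 (by omega)
    set c := α 0 * (1 - t^(n+2)) with hc
    have hcpos : 0 < c := mul_pos_of_neg_of_neg h0 (by linarith)
    have hcne : c ≠ 0 := hcpos.ne'
    set B := Matrix.of (fun i j : Fin (n+2) =>
      if j = i then 1/c else if j = i + 1 then -t/c else 0) with hB
    have hBapp : ∀ i j, B i j =
        if j = i then 1/c else if j = i + 1 then -t/c else 0 := fun i j => rfl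
    have hAB : A * B = 1 := by
      ext i j
      rw [Matrix.mul_apply, Matrix.one_apply]
      have hsum : ∑ k, A i k * B k j = A i j * (1/c) + A i (j-1) * (-t/c) := by
        have := sum_two (fun k => A i k * B k j) j (j-1) (fin_ne_sub_one j) ?_
        · rw [this]
          congr 1
          · show A i j * B j j = A i j * (1/c)
            rw [hBapp, if_pos rfl]
          · show A i (j-1) * B (j-1) j = A i (j-1) * (-t/c)
            rw [hBapp, if_neg (Ne.symm (fin_ne_sub_one j)).symm,
              if_pos (sub_add_cancel j 1).symm]
        · intro k hk1 hk2
          have e1 : j ≠ k := Ne.symm hk1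
          have e2 : j ≠ k + 1 := by
            intro h; exact hk2 (by rw [h, add_sub_cancel_right])
          show A i k * B k j = 0
          rw [hBapp, if_neg e1, if_neg e2, mul_zero]
      rw [hsum, hNe, hNe]
      by_cases hij : i = j
      · rw [if_pos hij, hij, sub_self]
        have e2 : j - 1 - j = (0:Fin (n+2)) - 1 := by abel
        rw [e2, hpow ((0:Fin (n+2)) - 1), hpow 0]
        have hm1 : (((0:Fin (n+2)) - 1 : Fin (n+2)) : ℕ) = n+1 := by
          rw [Fin.coe_sub_one, if_pos rfl]
        rw [hm1]
        field_simp
        rw [hc]; simp only [Fin.val_zero, pow_zero]; ring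
      · rw [if_neg hij]
        have hu0 : j - i ≠ 0 := fun h => hij (sub_eq_zero.mp h).symm
        have e2 : j - 1 - i = (j - i) - 1 := by abel
        rw [e2, hpow (j - i), hpow (j - i - 1)]
        have hv : ((j - i - 1 : Fin (n+2)) : ℕ) = ((j - i : Fin (n+2)) : ℕ) - 1 := by
          rw [Fin.coe_sub_one, if_neg hu0]
        have hv1 : 1 ≤ ((j - i : Fin (n+2)) : ℕ) := by
          rcases Nat.eq_zero_or_pos ((j - i : Fin (n+2)) : ℕ) with h | h
          · exact absurd (Fin.ext (by simpa using h) : j - i = 0) hu0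
          · exact h
        rw [hv]
        have hvv : t ^ (((j - i : Fin (n+2)) : ℕ) - 1) * t = t ^ ((j - i : Fin (n+2)) : ℕ) := by
          rw [← pow_succ]
          congr 1
          omega
        linear_combination (-(α 0 / c)) * hvv
    have hdet : A.det ≠ 0 := by
      have h := congrArg Matrix.det hAB
      rw [Matrix.det_mul, Matrix.det_one] at h
      intro hz
      rw [hz, zero_mul] at h
      exact zero_ne_one h
    have hinv : A⁻¹ = B := Matrix.inv_eq_right_inv hAB
    have hntc : -t/c < 0 := div_neg_of_neg_of_pos (by linarith) hcpos
    refine ⟨hdet, ?_, hApos, ?_, ?_, ?_, ?_⟩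
    · intro i j hij
      rw [hinv, hBapp, if_neg (Ne.symm hij)]
      split_ifs
      · exact hntc.le
      · exact le_refl 0
    · intro i
      rw [hinv, hBapp, if_pos rfl]
      exact (one_div_pos.mpr hcpos).ne'
    · intro i j hji
      have hji' : j = i + 1 := (fin_add_one_iff i j).mpr (Or.inl hji)
      have hne : j ≠ i := by
        intro h; rw [h] at hji; omega
      rw [hinv, hBapp, if_neg hne, if_pos hji']
      exact hntc.ne
    · have hcorner : (0 : Fin (n+2)) = Fin.last (n+1) + 1 :=
        (Fin.last_add_one (n+1)).symm
      have hne : (0 : Fin (n+2)) ≠ Fin.last (n+1) := by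
        intro h; have := congrArg Fin.val h; simp [Fin.last] at this
      rw [hinv, hBapp, if_neg hne, if_pos hcorner]
      exact hntc.ne
    · intro i j hij hval hcor
      have h1 : j ≠ i := Ne.symm hij
      have h2 : j ≠ i + 1 := by
        intro h
        rcases (fin_add_one_iff i j).mp h with h3 | h3
        · exact hval h3
        · exact hcor h3
      rw [hinv, hBapp, if_neg h1, if_neg h2]
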